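/- Let E be a real finite-dimensional normed vector space, let 0 < ν ≤ 1, let L ≥ 0, and let f : E → ℝ be differentiable and ν-approximable with parameter L, i.e. |f(y) − f(x) − ⟨f'(x), y − x⟩| ≤ (L/(1+ν))·‖y − x‖^{1+ν} for all x, y ∈ E. Then f has ν-Hölder continuous gradient with constant 2^{1−ν}·((1+ν)/ν)^ν·L, i.e. ‖f'(x) − f'(y)‖* ≤ 2^{1−ν}·((1+ν)/ν)^ν·L·‖x − y‖^ν for all x, y ∈ E. -/

import Mathlib

/-- ν-approximability with parameter L implies ν-Hölder continuity of the gradient with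
constant `2^(1-ν) * ((1+ν)/ν)^ν * L`. -/
theorem approximable_implies_holder_gradient
    {E : Type*} [NormedAddCommGroup E] [NormedSpace ℝ E] [FiniteDimensional ℝ E]
    (ν L : ℝ) (hν0 : 0 < ν) (hν1 : ν ≤ 1) (hL : 0 ≤ L)
    (f : E → ℝ) (f' : E → (E →L[ℝ] ℝ))
    (hdiff : ∀ x, HasFDerivAt f (f' x) x)
    (happrox : ∀ x y : E, |f y - f x - f' x (y - x)| ≤ L / (1 + ν) * ‖y - x‖ ^ (1 + ν)) :
    ∀ x y : E, ‖f' x - f' y‖ ≤ 2 ^ (1 - ν) * ((1 + ν) / ν) ^ ν * L * ‖x - y‖ ^ ν := by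
  have h1ν : (0:ℝ) < 1 + ν := by linarith
  intro x y
  rcases eq_or_ne x y with rfl | hxy
  · simp [Real.zero_rpow hν0.ne']
  have hr : 0 < ‖x - y‖ := norm_pos_iff.mpr (sub_ne_zero.mpr hxy)
  set r := ‖x - y‖ with hrdef
  set t := r / ν with htdef
  have htpos : 0 < t := div_pos hr hν0
  -- key estimate, valid for all h
  have key : ∀ h : E, |(f' x - f' y) h| ≤ 4 * (L / (1+ν)) * ((r + ‖h‖)/2) ^ (1+ν) := by
    intro h
    set z := (2:ℝ)⁻¹ • (x + y - h) with hz
    have e1 : z + h - x = (2:ℝ)⁻¹ • (y - x + h) := by rw [hz]; module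
    have e2 : z - x = (2:ℝ)⁻¹ • (y - x - h) := by rw [hz]; module
    have e3 : z + h - y = (2:ℝ)⁻¹ • (x - y + h) := by rw [hz]; module
    have e4 : z - y = (2:ℝ)⁻¹ • (x - y - h) := by rw [hz]; module
    have hb : ∀ w : E, ‖w‖ ≤ r + ‖h‖ →
        L / (1+ν) * ‖(2:ℝ)⁻¹ • w‖ ^ (1+ν) ≤ L / (1+ν) * ((r + ‖h‖)/2) ^ (1+ν) := by
      intro w hw
      have h1 : ‖(2:ℝ)⁻¹ • w‖ = ‖w‖ / 2 := by
        rw [norm_smul]; simp [Real.norm_eq_abs]; ring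
      apply mul_le_mul_of_nonneg_left _ (by positivity)
      rw [h1]
      exact Real.rpow_le_rpow (by positivity) (by linarith) (by linarith)
    have hyx : ‖y - x‖ = r := by rw [hrdef, norm_sub_rev]
    have n1 : ‖y - x + h‖ ≤ r + ‖h‖ := by
      calc ‖y - x + h‖ ≤ ‖y - x‖ + ‖h‖ := norm_add_le _ _
        _ = r + ‖h‖ := by rw [hyx]
    have n2 : ‖y - x - h‖ ≤ r + ‖h‖ := by
      calc ‖y - x - h‖ ≤ ‖y - x‖ + ‖h‖ := norm_sub_le _ _
        _ = r + ‖h‖ := by rw [hyx]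
    have n3 : ‖x - y + h‖ ≤ r + ‖h‖ := by
      calc ‖x - y + h‖ ≤ ‖x - y‖ + ‖h‖ := norm_add_le _ _
        _ = r + ‖h‖ := rfl
    have n4 : ‖x - y - h‖ ≤ r + ‖h‖ := by
      calc ‖x - y - h‖ ≤ ‖x - y‖ + ‖h‖ := norm_sub_le _ _
        _ = r + ‖h‖ := rfl
    have A1 : |f (z+h) - f x - f' x (z+h-x)| ≤ L / (1+ν) * ((r + ‖h‖)/2) ^ (1+ν) := by
      have := happrox x (z+h)
      rw [show ‖z+h-x‖ = ‖(2:ℝ)⁻¹ • _‖ from by rw [e1]] at this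
      exact this.trans (hb _ n1)
    have A2 : |f z - f x - f' x (z-x)| ≤ L / (1+ν) * ((r + ‖h‖)/2) ^ (1+ν) := by
      have := happrox x z
      rw [show ‖z-x‖ = ‖(2:ℝ)⁻¹ • _‖ from by rw [e2]] at this
      exact this.trans (hb _ n2)
    have B1 : |f (z+h) - f y - f' y (z+h-y)| ≤ L / (1+ν) * ((r + ‖h‖)/2) ^ (1+ν) := by
      have := happrox y (z+h)
      rw [show ‖z+h-y‖ = ‖(2:ℝ)⁻¹ • _‖ from by rw [e3]] at this
      exact this.trans (hb _ n3)
    have B2 : |f z - f y - f' y (z-y)| ≤ L / (1+ν) * ((r + ‖h‖)/2) ^ (1+ν) := by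
      have := happrox y z
      rw [show ‖z-y‖ = ‖(2:ℝ)⁻¹ • _‖ from by rw [e4]] at this
      exact this.trans (hb _ n4)
    -- the identity
    have hid : (f' x - f' y) h =
        ((f (z+h) - f y - f' y (z+h-y)) - (f z - f y - f' y (z-y)))
        - ((f (z+h) - f x - f' x (z+h-x)) - (f z - f x - f' x (z-x))) := by
      have h1 : f' x (z+h-x) - f' x (z-x) = f' x h := by
        rw [← map_sub]; congr 1; abel
      have h2 : f' y (z+h-y) - f' y (z-y) = f' y h := by
        rw [← map_sub]; congr 1; abel
      have h3 : (f' x - f' y) h = f' x h - f' y h := rfl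
      linarith [h1, h2, h3]
    rw [hid]
    have habs := abs_sub (a := (f (z+h) - f y - f' y (z+h-y)) - (f z - f y - f' y (z-y)))
      (b := (f (z+h) - f x - f' x (z+h-x)) - (f z - f x - f' x (z-x)))
    calc |((f (z+h) - f y - f' y (z+h-y)) - (f z - f y - f' y (z-y)))
        - ((f (z+h) - f x - f' x (z+h-x)) - (f z - f x - f' x (z-x)))|
        ≤ |f (z+h) - f y - f' y (z+h-y)| + |f z - f y - f' y (z-y)|
          + (|f (z+h) - f x - f' x (z+h-x)| + |f z - f x - f' x (z-x)|) := by
          refine (abs_sub _ _).trans (add_le_add (abs_sub _ _) (abs_sub _ _))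
      _ ≤ 4 * (L / (1+ν)) * ((r + ‖h‖)/2) ^ (1+ν) := by linarith
  -- arithmetic: value of the bound at ‖h‖ = t
  have harith : 4 * (L / (1+ν)) * ((r + t)/2) ^ (1+ν)
      = (2 ^ (1 - ν) * ((1 + ν) / ν) ^ ν * L * r ^ ν) * t := by
    have hrt : (r + t)/2 = r * (1+ν) / (2*ν) := by
      rw [htdef]; field_simp; ring
    rw [hrt]
    have h1 : (r * (1+ν) / (2*ν)) ^ (1+ν)
        = r ^ (1+ν) * (1+ν) ^ (1+ν) / (2 ^ (1+ν) * ν ^ (1+ν)) := by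
      rw [Real.div_rpow (by positivity) (by positivity),
        Real.mul_rpow (by positivity) (by positivity),
        Real.mul_rpow (by positivity) (by positivity)]
    have h2 : r ^ (1+ν) = r * r ^ ν := by
      rw [Real.rpow_add hr, Real.rpow_one]
    have h3 : (1+ν) ^ (1+ν) = (1+ν) * (1+ν) ^ ν := by
      rw [Real.rpow_add h1ν, Real.rpow_one]
    have h4 : (2:ℝ) ^ (1+ν) = 2 * 2 ^ ν := by
      rw [Real.rpow_add (by norm_num : (0:ℝ) < 2), Real.rpow_one]
    have h5 : ν ^ (1+ν) = ν * ν ^ ν := by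
      rw [Real.rpow_add hν0, Real.rpow_one]
    have h6 : (2:ℝ) ^ (1-ν) = 2 / 2 ^ ν := by
      rw [Real.rpow_sub (by norm_num : (0:ℝ) < 2), Real.rpow_one]
    have h7 : ((1+ν)/ν) ^ ν = (1+ν) ^ ν / ν ^ ν := by
      rw [Real.div_rpow (by positivity) (by positivity)]
    have p1 : (0:ℝ) < (1+ν) ^ ν := Real.rpow_pos_of_pos h1ν ν
    have p2 : (0:ℝ) < ν ^ ν := Real.rpow_pos_of_pos hν0 ν
    have p3 : (0:ℝ) < (2:ℝ) ^ ν := Real.rpow_pos_of_pos (by norm_num) ν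
    rw [h1, h2, h3, h4, h5, h6, h7, htdef]
    field_simp
    ring
  -- estimate at norm t
  have keyt : ∀ h : E, ‖h‖ = t →
      |(f' x - f' y) h| ≤ (2 ^ (1 - ν) * ((1 + ν) / ν) ^ ν * L * r ^ ν) * t := by
    intro h hh
    have := key h
    rw [hh] at this
    linarith [harith ▸ this]
  -- conclude via operator norm
  apply ContinuousLinearMap.opNorm_le_bound _ (by positivity)
  intro h
  rcases eq_or_ne h 0 with rfl | hh
  · simp
  have hs : 0 < ‖h‖ := norm_pos_iff.mpr hh
  have hu : ‖(t / ‖h‖) • h‖ = t := by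
    rw [norm_smul, Real.norm_eq_abs, abs_of_pos (div_pos htpos hs), div_mul_cancel₀ _ hs.ne']
  have hv := keyt _ hu
  rw [map_smul] at hv
  have hval : (f' x - f' y) ((t / ‖h‖) • h) = (t / ‖h‖) * ((f' x - f' y) h) := by
    rw [map_smul]; rfl
  have habs : |(t / ‖h‖) • ((f' x - f' y) h)| = (t / ‖h‖) * |(f' x - f' y) h| := by
    rw [smul_eq_mul, abs_mul, abs_of_pos (div_pos htpos hs)]
  rw [habs] at hv
  have hfin : |(f' x - f' y) h| ≤ (2 ^ (1 - ν) * ((1 + ν) / ν) ^ ν * L * r ^ ν) * ‖h‖ := by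
    have hmul := mul_le_mul_of_nonneg_right hv (le_of_lt (div_pos hs htpos))
    have e1 : t / ‖h‖ * |(f' x - f' y) h| * (‖h‖ / t) = |(f' x - f' y) h| := by
      field_simp
    have e2 : 2 ^ (1 - ν) * ((1 + ν) / ν) ^ ν * L * r ^ ν * t * (‖h‖ / t)
        = (2 ^ (1 - ν) * ((1 + ν) / ν) ^ ν * L * r ^ ν) * ‖h‖ := by
      field_simp
    rwa [e1, e2] at hmul
  rw [Real.norm_eq_abs]
  calc |(f' x - f' y) h| ≤ (2 ^ (1 - ν) * ((1 + ν) / ν) ^ ν * L * r ^ ν) * ‖h‖ := hfin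
    _ = 2 ^ (1 - ν) * ((1 + ν) / ν) ^ ν * L * r ^ ν * ‖h‖ := by ring
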